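/- Let m ≥ 2, let Γ be a subgroup of Perm(Fin m), and let ⁅Γ,Γ⁆ denote its commutator subgroup. Let O be an orbit of the natural action of ⁅Γ,Γ⁆ on Fin m and let j ∈ O. If c is an m-edge-colouring of a finite complete graph all of whose edge colours lie in O, then c is Γ-switch equivalent to the constant colouring in which every edge has colour j. -/

import Mathlib

open scoped Classical in
/-- Switch the edge-colouring `c` at vertex `v` with permutation `π`: every edge
incident with `v` has its colour replaced by its image under `π`. -/
noncomputable def switchAt {V K : Type*} (c : Sym2 V → K) (π : Equiv.Perm K) (v : V) :
    Sym2 V → K :=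
  fun s => if v ∈ s then π (c s) else c s

/-- Two colourings are `Γ`-switch equivalent if one is obtained from the other by a
finite sequence of switches at vertices with permutations from `Γ`. -/
def SwitchEquiv {V K : Type*} (Γ : Subgroup (Equiv.Perm K)) (c c' : Sym2 V → K) : Prop :=
  Relation.ReflTransGen (fun d d' => ∃ π ∈ Γ, ∃ v : V, d' = switchAt d π v) c c'

/-- The colouring `c` contains a monochromatic complete graph on `t` vertices of colour `i`. -/
def HasMonoK {V K : Type*} (c : Sym2 V → K) (i : K) (t : ℕ) : Prop :=
  ∃ S : Finset V, S.card = t ∧ ∀ x ∈ S, ∀ y ∈ S, x ≠ y → c s(x, y) = i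

open scoped Classical

section Aux
variable {V K : Type*} {Γ : Subgroup (Equiv.Perm K)}

lemma switchAt_switchAt (c : Sym2 V → K) (π σ : Equiv.Perm K) (v : V) :
    switchAt (switchAt c π v) σ v = switchAt c (σ * π) v := by
  funext s
  simp only [switchAt]
  split_ifs <;> simp

lemma switchAt_one (c : Sym2 V → K) (v : V) : switchAt c (1 : Equiv.Perm K) v = c := by
  funext s; simp [switchAt]

lemma switchEquiv_refl (c : Sym2 V → K) : SwitchEquiv Γ c c := Relation.ReflTransGen.refl

lemma switchEquiv_trans {a b c : Sym2 V → K} (h1 : SwitchEquiv Γ a b)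
    (h2 : SwitchEquiv Γ b c) : SwitchEquiv Γ a c := h1.trans h2

lemma switchEquiv_single {c : Sym2 V → K} {π : Equiv.Perm K} (hπ : π ∈ Γ) (v : V) :
    SwitchEquiv Γ c (switchAt c π v) :=
  Relation.ReflTransGen.single ⟨π, hπ, v, rfl⟩

lemma switchEquiv_symm {a b : Sym2 V → K} (h : SwitchEquiv Γ a b) : SwitchEquiv Γ b a := by
  refine @Std.Symm.symm _ _ (@Relation.ReflTransGen.stdSymm _ _ ⟨?_⟩) _ _ h
  rintro d d' ⟨π, hπ, v, rfl⟩
  refine ⟨π⁻¹, inv_mem hπ, v, ?_⟩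
  rw [switchAt_switchAt, inv_mul_cancel, switchAt_one]

/-- Apply permutation `g` to the colour of the single edge `e`. -/
noncomputable def applyEdge (e : Sym2 V) (g : Equiv.Perm K) (c : Sym2 V → K) : Sym2 V → K :=
  fun s => if s = e then g (c s) else c s

lemma applyEdge_one (e : Sym2 V) (c : Sym2 V → K) : applyEdge e (1 : Equiv.Perm K) c = c := by
  funext s; simp [applyEdge]

lemma applyEdge_mul (e : Sym2 V) (g h : Equiv.Perm K) (c : Sym2 V → K) :
    applyEdge e (g * h) c = applyEdge e g (applyEdge e h c) := by
  funext s; simp only [applyEdge]; split_ifs <;> simp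

/-- The four-switch move: switching at `x` with `π`, `y` with `σ`, `x` with `π⁻¹`,
`y` with `σ⁻¹` applies the commutator `σ⁻¹ π⁻¹ σ π` to the edge `s(x,y)` only. -/
lemma four_switch (c : Sym2 V → K) (π σ : Equiv.Perm K) {x y : V} (hxy : x ≠ y) :
    switchAt (switchAt (switchAt (switchAt c π x) σ y) π⁻¹ x) σ⁻¹ y
      = applyEdge s(x, y) (σ⁻¹ * π⁻¹ * σ * π) c := by
  funext s
  induction s using Sym2.ind with
  | _ a b =>
    simp only [switchAt, applyEdge, Sym2.mem_iff, Sym2.eq, Sym2.rel_iff', Prod.mk.injEq,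
      Prod.swap_prod_mk, Equiv.Perm.mul_apply]
    by_cases hxa : x = a <;> by_cases hxb : x = b <;> by_cases hya : y = a <;>
      by_cases hyb : y = b <;> simp_all <;> aesop

lemma commutator_edge_move {x y : V} (hxy : x ≠ y) {g : Equiv.Perm K}
    (hg : g ∈ ⁅Γ, Γ⁆) (c : Sym2 V → K) :
    SwitchEquiv Γ c (applyEdge s(x, y) g c) := by
  rw [Subgroup.commutator_def] at hg
  induction hg using Subgroup.closure_induction generalizing c with
  | mem z hz =>
    obtain ⟨p, hp, q, hq, rfl⟩ := hz
    have h4 := four_switch c q⁻¹ p⁻¹ hxy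
    simp only [inv_inv] at h4
    open scoped commutatorElement in have : ⁅p, q⁆ = p * q * p⁻¹ * q⁻¹ := rfl
    rw [this, ← h4]
    exact switchEquiv_trans (switchEquiv_trans (switchEquiv_trans (switchEquiv_trans
      (switchEquiv_refl c) (switchEquiv_single (inv_mem hq) x))
      (switchEquiv_single (inv_mem hp) y)) (switchEquiv_single hq x))
      (switchEquiv_single hp y)
  | one => rw [applyEdge_one]; exact switchEquiv_refl c
  | mul z w _ _ ihz ihw =>
    rw [applyEdge_mul]
    exact switchEquiv_trans (ihw c) (ihz _)
  | inv z _ ih =>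
    have := ih (applyEdge s(x, y) z⁻¹ c)
    rw [← applyEdge_mul, mul_inv_cancel, applyEdge_one] at this
    exact switchEquiv_symm this

end Aux
theorem stmt3 (m : ℕ) (hm : 2 ≤ m) (Γ : Subgroup (Equiv.Perm (Fin m)))
    (j : Fin m) (V : Type*) [Fintype V] (c : Sym2 V → Fin m)
    (hc : ∀ x y : V, x ≠ y → c s(x, y) ∈ MulAction.orbit (↥⁅Γ, Γ⁆) j) :
    ∃ c', SwitchEquiv Γ c c' ∧ ∀ x y : V, x ≠ y → c' s(x, y) = j := by
  classical
  suffices H : ∀ (F : Finset (Sym2 V)) (c : Sym2 V → Fin m),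
      (∀ x y : V, x ≠ y → c s(x, y) ∈ MulAction.orbit (↥⁅Γ, Γ⁆) j) →
      ∃ c', SwitchEquiv Γ c c' ∧ (∀ s ∈ F, ¬ s.IsDiag → c' s = j) ∧
        ∀ x y : V, x ≠ y → c' s(x, y) ∈ MulAction.orbit (↥⁅Γ, Γ⁆) j by
    obtain ⟨c', h1, h2, _⟩ := H Finset.univ c hc
    refine ⟨c', h1, fun x y hxy => h2 s(x, y) (Finset.mem_univ _) ?_⟩
    simpa [Sym2.mk_isDiag_iff] using hxy
  intro F
  induction F using Finset.induction with
  | empty =>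
    intro c hc
    exact ⟨c, switchEquiv_refl c, by simp, hc⟩
  | @insert a F ha ih =>
    intro c hc
    obtain ⟨c₁, hcc₁, hF, horb⟩ := ih c hc
    by_cases hd : a.IsDiag
    · refine ⟨c₁, hcc₁, fun s hs hsd => ?_, horb⟩
      rcases Finset.mem_insert.mp hs with h | h
      · exact absurd (h ▸ hd) hsd
      · exact hF s h hsd
    · induction a using Sym2.ind with
      | _ x y =>
        have hxy : x ≠ y := by simpa [Sym2.mk_isDiag_iff] using hd
        obtain ⟨g, hg⟩ := horb x y hxy
        set c₂ := applyEdge s(x, y) (↑g⁻¹ : Equiv.Perm (Fin m)) c₁ with hc₂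
        have hmove : SwitchEquiv Γ c₁ c₂ :=
          commutator_edge_move hxy (g⁻¹ : ↥⁅Γ, Γ⁆).2 c₁
        have hval : c₂ s(x, y) = j := by
          have : (↑g : Equiv.Perm (Fin m)) j = c₁ s(x, y) := hg
          simp [hc₂, applyEdge, ← this]
        refine ⟨c₂, switchEquiv_trans hcc₁ hmove, ?_, ?_⟩
        · intro s hs hsd
          rcases Finset.mem_insert.mp hs with h | h
          · exact h ▸ hval
          · have hne : s ≠ s(x, y) := fun he => ha (he ▸ h)
            simp only [hc₂, applyEdge, if_neg hne]
            exact hF s h hsd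
        · intro u v huv
          by_cases he : s(u, v) = s(x, y)
          · rw [he, hval]; exact MulAction.mem_orbit_self j
          · simp only [hc₂, applyEdge, if_neg he]
            exact horb u v huv
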